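/- Under the conditions (★) for the pair of good gradings (f₁,H₁), (f₂,H₂): the subspace l₁ := g_{1,2} is isotropic in (g^{(1)}_1, ω₁) and its ω₁-orthogonal is l₁^{⊥,ω₁} = g_{1,1} ⊕ g_{1,2}. -/

import Mathlib

open DirectSum

section Theta

variable {g : Type*} [LieRing g] [LieAlgebra ℂ g]
variable {ι : Type*} [DecidableEq ι]

noncomputable def thetaOp (E : ι → Submodule ℂ g) (hE : DirectSum.IsInternal E)
    (w : ι → ℂ) : g →ₗ[ℂ] g :=
  (DirectSum.toModule ℂ ι g fun i => w i • (E i).subtype) ∘ₗ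
    ((LinearEquiv.ofBijective (DirectSum.coeLinearMap E) hE).symm : g →ₗ[ℂ] ⨁ i, E i)

theorem thetaOp_apply_of_mem (E : ι → Submodule ℂ g) (hE : DirectSum.IsInternal E)
    (w : ι → ℂ) {i : ι} {x : g} (hx : x ∈ E i) :
    thetaOp E hE w x = w i • x := by
  set e := LinearEquiv.ofBijective (DirectSum.coeLinearMap E) hE with he
  have h1 : e.symm x = DirectSum.lof ℂ ι (fun i => E i) i ⟨x, hx⟩ := by
    apply e.injective
    rw [LinearEquiv.apply_symm_apply]
    have : e (DirectSum.lof ℂ ι (fun i => E i) i ⟨x, hx⟩)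
        = DirectSum.coeLinearMap E (DirectSum.lof ℂ ι (fun i => E i) i ⟨x, hx⟩) := rfl
    rw [this, DirectSum.lof_eq_of, DirectSum.coeLinearMap_of]
  show (DirectSum.toModule ℂ ι g fun i => w i • (E i).subtype) (e.symm x) = w i • x
  rw [h1, DirectSum.toModule_lof]
  rfl

theorem thetaOp_leibniz (E : ι → Submodule ℂ g) (hE : DirectSum.IsInternal E) (w : ι → ℂ)
    (hbr : ∀ i j : ι, ∀ x ∈ E i, ∀ y ∈ E j, ∃ k, ⁅x, y⁆ ∈ E k ∧ w k = w i + w j)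
    (x y : g) :
    thetaOp E hE w ⁅x, y⁆ = ⁅thetaOp E hE w x, y⁆ + ⁅x, thetaOp E hE w y⁆ := by
  set T := thetaOp E hE w with hT
  have htop : ∀ z : g, z ∈ ⨆ i, E i := by
    rw [hE.submodule_iSup_eq_top]; exact fun z => trivial
  refine Submodule.iSup_induction E
    (motive := fun x => ∀ y : g, T ⁅x, y⁆ = ⁅T x, y⁆ + ⁅x, T y⁆) (htop x) ?_ ?_ ?_ y
  · intro i x hx
    intro y
    refine Submodule.iSup_induction E
      (motive := fun y => T ⁅x, y⁆ = ⁅T x, y⁆ + ⁅x, T y⁆) (htop y) ?_ ?_ ?_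
    · intro j y hy
      obtain ⟨k, hk, hwk⟩ := hbr i j x hx y hy
      rw [thetaOp_apply_of_mem E hE w hk, thetaOp_apply_of_mem E hE w hx,
        thetaOp_apply_of_mem E hE w hy, hwk, add_smul, smul_lie, lie_smul]
    · simp
    · intro y₁ y₂ h1 h2
      simp only [lie_add, map_add, h1, h2]
      abel
  · intro y; simp
  · intro x₁ x₂ h1 h2 y
    simp only [add_lie, map_add, h1 y, h2 y]
    abel

end Theta

section Killing

variable {g : Type*} [LieRing g] [LieAlgebra ℂ g] [FiniteDimensional ℂ g]

theorem isKilling_of_eigen [LieAlgebra.IsSimple ℂ g] {x₀ v : g} (hv : v ≠ 0)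
    (hxv : ⁅x₀, v⁆ = -v) : LieAlgebra.IsKilling ℂ g := by
  constructor
  rcases LieAlgebra.IsSimple.eq_bot_or_eq_top (LieIdeal.killingCompl ℂ g ⊤) with h | h
  · exact h
  exfalso
  have hκ : ∀ u z : g, killingForm ℂ g u z = 0 := by
    intro u z
    have hz : z ∈ LieIdeal.killingCompl ℂ g ⊤ := by rw [h]; trivial
    exact (LieIdeal.mem_killingCompl ℂ g ⊤).mp hz u trivial
  classical
  set D : Module.End ℂ g := LieModule.toEnd ℂ g g x₀ with hD
  set E : ℂ → Submodule ℂ g := fun μ => D.maxGenEigenspace μ with hEdef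
  have hE : DirectSum.IsInternal E :=
    DirectSum.isInternal_submodule_of_iSupIndep_of_iSup_eq_top
      D.independent_maxGenEigenspace D.iSup_maxGenEigenspace_eq_top
  have hfin : {μ : ℂ | E μ ≠ ⊥}.Finite :=
    WellFoundedGT.finite_ne_bot_of_iSupIndep D.independent_maxGenEigenspace
  have hvE : v ∈ E (-1) := by
    rw [hEdef]
    rw [Module.End.mem_maxGenEigenspace]
    refine ⟨1, ?_⟩
    rw [pow_one]
    simp only [LinearMap.sub_apply, LinearMap.smul_apply, Module.End.one_apply, hD,
      LieModule.toEnd_apply_apply, hxv]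
    simp
  have hEne : E (-1) ≠ ⊥ := by
    intro hbot
    rw [hbot] at hvE
    exact hv (by simpa using hvE)
  -- a ℚ-linear functional on ℂ with φ (-1) = 1
  obtain ⟨φ, hφ⟩ : ∃ φ : ℂ →ₗ[ℚ] ℚ, φ (-1) = 1 := by
    have hne : (-1 : ℂ) ≠ 0 := by norm_num
    obtain ⟨W, hW⟩ := Submodule.exists_isCompl (Submodule.span ℚ {(-1 : ℂ)})
    refine ⟨((LinearEquiv.toSpanNonzeroSingleton ℚ ℂ (-1) hne).symm : _ →ₗ[ℚ] ℚ) ∘ₗ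
      (Submodule.span ℚ {(-1 : ℂ)}).linearProjOfIsCompl W hW, ?_⟩
    have h1 : ((Submodule.span ℚ {(-1 : ℂ)}).linearProjOfIsCompl W hW) (-1 : ℂ)
        = ⟨(-1 : ℂ), Submodule.mem_span_singleton_self _⟩ := by
      exact Submodule.linearProjOfIsCompl_apply_left hW
        ⟨(-1 : ℂ), Submodule.mem_span_singleton_self _⟩
    rw [LinearMap.comp_apply, h1, LinearEquiv.coe_coe, LinearEquiv.symm_apply_eq]
    exact (LinearEquiv.toSpanNonzeroSingleton_one ℚ ℂ (-1) hne).symm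
  set w : ℂ → ℂ := fun μ => ((φ μ : ℚ) : ℂ) with hwdef
  set S : g →ₗ[ℂ] g := thetaOp E hE w with hS
  have hSapp : ∀ {μ : ℂ} {z : g}, z ∈ E μ → S z = w μ • z :=
    fun h => thetaOp_apply_of_mem E hE w h
  have hleib : ∀ x y : g, S ⁅x, y⁆ = ⁅S x, y⁆ + ⁅x, S y⁆ := by
    apply thetaOp_leibniz
    intro i j x hx y hy
    refine ⟨i + j, LieModule.lie_mem_maxGenEigenspace_toEnd hx hy, ?_⟩
    simp only [hwdef, map_add]
    push_cast
    ring
  -- S ∘ ad y - ad y ∘ S = ad (S y)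
  have hadS : ∀ y : g, S ∘ₗ LieModule.toEnd ℂ g g y - LieModule.toEnd ℂ g g y ∘ₗ S
      = LieModule.toEnd ℂ g g (S y) := by
    intro y
    ext m
    simp only [LinearMap.sub_apply, LinearMap.comp_apply, LieModule.toEnd_apply_apply]
    rw [hleib y m]
    abel
  -- trace of S ∘ ad (bracket) vanishes
  have hbrtr : ∀ y z : g, LinearMap.trace ℂ g (S ∘ₗ LieModule.toEnd ℂ g g ⁅y, z⁆) = 0 := by
    intro y z
    have h1 : S ∘ₗ LieModule.toEnd ℂ g g ⁅y, z⁆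
        = (S ∘ₗ LieModule.toEnd ℂ g g y) ∘ₗ LieModule.toEnd ℂ g g z
          - S ∘ₗ (LieModule.toEnd ℂ g g z ∘ₗ LieModule.toEnd ℂ g g y) := by
      letI := LieRing.ofAssociativeRing (A := Module.End ℂ g)
      rw [LieHom.map_lie, LieRing.of_associative_ring_bracket]
      ext m
      simp [Module.End.mul_apply]
    have h2 : LinearMap.trace ℂ g (S ∘ₗ (LieModule.toEnd ℂ g g z ∘ₗ LieModule.toEnd ℂ g g y))
        = LinearMap.trace ℂ g ((LieModule.toEnd ℂ g g y ∘ₗ S) ∘ₗ LieModule.toEnd ℂ g g z) := by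
      rw [← LinearMap.comp_assoc, LinearMap.trace_comp_comm' (LieModule.toEnd ℂ g g y)
        (S ∘ₗ LieModule.toEnd ℂ g g z), ← LinearMap.comp_assoc]
    rw [h1, map_sub, h2, ← map_sub, ← LinearMap.sub_comp, hadS y]
    have h3 : killingForm ℂ g (S y) z = 0 := hκ _ _
    rw [killingForm_apply_apply] at h3
    exact h3
  -- the commutator ideal is everything
  have htop : (⁅(⊤ : LieIdeal ℂ g), (⊤ : LieIdeal ℂ g)⁆ : LieIdeal ℂ g) = ⊤ := by
    rcases LieAlgebra.IsSimple.eq_bot_or_eq_top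
      (⁅(⊤ : LieIdeal ℂ g), (⊤ : LieIdeal ℂ g)⁆ : LieIdeal ℂ g) with h' | h'
    · exfalso
      apply LieAlgebra.IsSimple.non_abelian (R := ℂ) (L := g)
      constructor
      intro a b
      have hab : (⁅a, b⁆ : g) ∈ (⁅(⊤ : LieIdeal ℂ g), (⊤ : LieIdeal ℂ g)⁆ : LieIdeal ℂ g) :=
        LieSubmodule.lie_mem_lie trivial trivial
      rw [h'] at hab
      simpa using hab
    · exact h'
  -- trace of S ∘ D vanishes since x₀ is a sum of brackets
  have htr0 : LinearMap.trace ℂ g (S ∘ₗ D) = 0 := by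
    have hx₀ : x₀ ∈ Submodule.span ℂ
        {m : g | ∃ u ∈ (⊤ : LieIdeal ℂ g), ∃ n ∈ (⊤ : LieIdeal ℂ g), ⁅u, n⁆ = m} := by
      rw [← LieSubmodule.lieIdeal_oper_eq_linear_span', htop]
      trivial
    have hall : ∀ m ∈ Submodule.span ℂ
        {m : g | ∃ u ∈ (⊤ : LieIdeal ℂ g), ∃ n ∈ (⊤ : LieIdeal ℂ g), ⁅u, n⁆ = m},
        LinearMap.trace ℂ g (S ∘ₗ LieModule.toEnd ℂ g g m) = 0 := by
      intro m hm
      induction hm using Submodule.span_induction with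
      | mem m hm =>
        obtain ⟨u, -, n, -, rfl⟩ := hm
        exact hbrtr u n
      | zero => simp
      | add m₁ m₂ _ _ h₁ h₂ =>
        rw [map_add, LinearMap.comp_add, map_add, h₁, h₂, add_zero]
      | smul c m _ hm =>
        rw [map_smul, LinearMap.comp_smul, map_smul, hm, smul_zero]
    rw [hD]
    exact hall x₀ hx₀
  -- compute the trace of S ∘ D via the eigenspace decomposition
  have hmapsD : ∀ μ : ℂ, Set.MapsTo D (E μ) (E μ) :=
    fun μ => D.mapsTo_maxGenEigenspace_of_comm rfl μ
  have hmapsSD : ∀ μ : ℂ, Set.MapsTo (S ∘ₗ D) (E μ) (E μ) := by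
    intro μ z hz
    have h1 : D z ∈ E μ := hmapsD μ hz
    have h2 : S (D z) = w μ • D z := hSapp h1
    show S (D z) ∈ E μ
    rw [h2]
    exact Submodule.smul_mem _ _ h1
  have key := LinearMap.trace_eq_sum_trace_restrict' hE hfin hmapsSD
  have hterm : ∀ μ : ℂ, LinearMap.trace ℂ (E μ) ((S ∘ₗ D).restrict (hmapsSD μ))
      = w μ * (μ * (Module.finrank ℂ (E μ) : ℂ)) := by
    intro μ
    have hres : (S ∘ₗ D).restrict (hmapsSD μ) = w μ • (D.restrict (hmapsD μ)) := by
      refine LinearMap.ext fun m => Subtype.ext ?_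
      simp only [LinearMap.restrict_coe_apply, LinearMap.comp_apply, LinearMap.smul_apply,
        SetLike.val_smul]
      exact hSapp (hmapsD μ m.2)
    have hDres : LinearMap.trace ℂ (E μ) (D.restrict (hmapsD μ))
        = μ * (Module.finrank ℂ (E μ) : ℂ) := by
      have hnil := D.isNilpotent_restrict_maxGenEigenspace_sub_algebraMap μ
      have hsub : Set.MapsTo ⇑(D - algebraMap ℂ (Module.End ℂ g) μ) (E μ) (E μ) := by
        intro m hm
        have heval : (D - algebraMap ℂ (Module.End ℂ g) μ) m = D m - μ • m := by
          simp [Module.algebraMap_end_apply]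
        show (D - algebraMap ℂ (Module.End ℂ g) μ) m ∈ E μ
        rw [heval]
        exact Submodule.sub_mem _ (hmapsD μ hm) (Submodule.smul_mem _ _ hm)
      have hsplit : D.restrict (hmapsD μ)
          = (D - algebraMap ℂ (Module.End ℂ g) μ).restrict hsub
            + (algebraMap ℂ (Module.End ℂ (E μ)) μ) := by
        refine LinearMap.ext fun m => Subtype.ext ?_
        simp [LinearMap.restrict_coe_apply, Module.algebraMap_end_apply]
        show D m = (D - algebraMap ℂ (Module.End ℂ g) μ) m + μ • (m : g)
        simp [Module.algebraMap_end_apply]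
      rw [hsplit, map_add]
      have h0 : LinearMap.trace ℂ (E μ)
          ((D - algebraMap ℂ (Module.End ℂ g) μ).restrict hsub) = 0 :=
        (LinearMap.isNilpotent_trace_of_isNilpotent hnil).eq_zero
      rw [h0, zero_add]
      have : (algebraMap ℂ (Module.End ℂ (E μ)) μ) = μ • (1 : Module.End ℂ (E μ)) := by
        ext m; simp [Module.algebraMap_end_apply]
      rw [this, map_smul, LinearMap.trace_one, smul_eq_mul]
    rw [hres, map_smul, hDres, smul_eq_mul]
  have hsum : ∑ μ ∈ hfin.toFinset, w μ * (μ * (Module.finrank ℂ (E μ) : ℂ)) = 0 := by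
    rw [← Finset.sum_congr rfl (fun μ _ => hterm μ), ← key, htr0]
  -- apply φ to the identity
  have hQsum : ∑ μ ∈ hfin.toFinset, (Module.finrank ℂ (E μ) : ℚ) * (φ μ) ^ 2 = 0 := by
    have h1 : ∀ μ : ℂ, w μ * (μ * (Module.finrank ℂ (E μ) : ℂ))
        = (φ μ) • ((Module.finrank ℂ (E μ)) • μ) := by
      intro μ
      rw [Rat.smul_def, nsmul_eq_mul, hwdef]
      ring
    rw [Finset.sum_congr rfl (fun μ _ => h1 μ)] at hsum
    have h2 := congrArg φ hsum
    rw [map_sum, map_zero] at h2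
    rw [← h2]
    apply Finset.sum_congr rfl
    intro μ _
    rw [map_smul, map_nsmul, smul_eq_mul, nsmul_eq_mul]
    ring
  have hbound : (Module.finrank ℂ (E (-1)) : ℚ) * (φ (-1)) ^ 2 = 0 := by
    have hmem : (-1 : ℂ) ∈ hfin.toFinset := hfin.mem_toFinset.mpr hEne
    have hnonneg : ∀ μ ∈ hfin.toFinset,
        0 ≤ (Module.finrank ℂ (E μ) : ℚ) * (φ μ) ^ 2 := by
      intro μ _
      positivity
    exact (Finset.sum_eq_zero_iff_of_nonneg hnonneg).mp hQsum _ hmem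
  rw [hφ] at hbound
  have hfr : Module.finrank ℂ (E (-1)) = 0 := by
    have := hbound
    simpa using this
  exact hEne (Submodule.finrank_eq_zero.mp hfr)

end Killing

section Ortho

theorem graded_ortho {g : Type*} [LieRing g] [LieAlgebra ℂ g] [Module.Finite ℂ g]
    [LieAlgebra.IsKilling ℂ g]
    (Φ : g →ₗ[ℂ] g →ₗ[ℂ] ℂ) (hinv : ∀ x y z : g, Φ ⁅x, y⁆ z = Φ x ⁅y, z⁆)
    (gr : ℤ → Submodule ℂ g) (hdec : DirectSum.IsInternal fun δ : ℤ => gr δ)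
    (hbr : ∀ δ₁ δ₂ : ℤ, ∀ x ∈ gr δ₁, ∀ y ∈ gr δ₂, ⁅x, y⁆ ∈ gr (δ₁ + δ₂)) :
    ∀ a b : ℤ, a + b ≠ 0 → ∀ x ∈ gr a, ∀ y ∈ gr b, Φ x y = 0 := by
  classical
  set w : ℤ → ℂ := fun δ => (δ : ℂ) with hw
  set T : g →ₗ[ℂ] g := thetaOp (fun δ : ℤ => gr δ) hdec w with hT
  have hTapp : ∀ {δ : ℤ} {x : g}, x ∈ gr δ → T x = (δ : ℂ) • x :=
    fun h => thetaOp_apply_of_mem _ hdec w h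
  have hleib : ∀ a b : g, T ⁅a, b⁆ = ⁅T a, b⁆ + ⁅a, T b⁆ := by
    apply thetaOp_leibniz
    intro i j x hx y hy
    exact ⟨i + j, hbr i j x hx y hy, by simp only [hw]; push_cast; ring⟩
  obtain ⟨h, hh⟩ := LieDerivation.IsKilling.exists_eq_ad
    (⟨T, fun a b => by rw [hleib a b, ← lie_skew b (T a)]; abel⟩ : LieDerivation ℂ g g)
  have had : ∀ z : g, ⁅h, z⁆ = T z := by
    intro z
    have h1 : ((LieDerivation.ad ℂ g) h) z = T z := by rw [hh]; rfl
    rw [← h1]; simp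
  intro a b hab x hx y hy
  have e1 : Φ x ⁅h, y⁆ = Φ ⁅x, h⁆ y := (hinv x h y).symm
  have e2 : (⁅x, h⁆ : g) = -⁅h, x⁆ := neg_eq_iff_eq_neg.mp (lie_skew h x)
  have key : Φ ⁅h, x⁆ y + Φ x ⁅h, y⁆ = 0 := by
    rw [e1, e2, map_neg, LinearMap.neg_apply, add_neg_cancel]
  rw [had, had, hTapp hx, hTapp hy, map_smul, LinearMap.smul_apply, map_smul] at key
  have key2 : ((a : ℂ) + (b : ℂ)) * Φ x y = 0 := by
    rw [add_mul, ← smul_eq_mul, ← smul_eq_mul]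
    exact key
  have hne : ((a : ℂ) + (b : ℂ)) ≠ 0 := by
    rw [← Int.cast_add]
    exact_mod_cast hab
  exact (mul_eq_zero.mp key2).resolve_left hne

end Ortho

/-- Under the conditions (★) for the pair of good gradings
`(f₁, H₁)`, `(f₂, H₂)`: the subspace `l₁ := g_{1,2}` is isotropic in `(g^{(1)}₁, ω₁)`
and its `ω₁`-orthogonal inside `g^{(1)}₁` is `l₁^{⊥,ω₁} = g_{1,1} ⊕ g_{1,2}`. -/
theorem statement8
    (g : Type*) [LieRing g] [LieAlgebra ℂ g] [FiniteDimensional ℂ g]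
    [LieAlgebra.IsSimple ℂ g]
    (Φ : g →ₗ[ℂ] g →ₗ[ℂ] ℂ)
    (hsymm : ∀ x y : g, Φ x y = Φ y x)
    (hinv : ∀ x y z : g, Φ ⁅x, y⁆ z = Φ x ⁅y, z⁆)
    (hnondeg : ∀ x : g, (∀ y : g, Φ x y = 0) → x = 0)
    (gr1 gr2 : ℤ → Submodule ℂ g)
    (hdec1 : DirectSum.IsInternal fun δ : ℤ => gr1 δ)
    (hdec2 : DirectSum.IsInternal fun δ : ℤ => gr2 δ)
    (hbidec : DirectSum.IsInternal fun p : ℤ × ℤ => gr1 p.1 ⊓ gr2 p.2)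
    (hbr1 : ∀ δ₁ δ₂ : ℤ, ∀ x ∈ gr1 δ₁, ∀ y ∈ gr1 δ₂, ⁅x, y⁆ ∈ gr1 (δ₁ + δ₂))
    (hbr2 : ∀ δ₁ δ₂ : ℤ, ∀ x ∈ gr2 δ₁, ∀ y ∈ gr2 δ₂, ⁅x, y⁆ ∈ gr2 (δ₁ + δ₂))
    (f1 f2 : g) (hf1 : f1 ∈ gr1 (-2)) (hf2 : f2 ∈ gr2 (-2))
    (hgood1inj : ∀ δ : ℤ, 1 ≤ δ → ∀ x ∈ gr1 δ, ⁅f1, x⁆ = 0 → x = 0)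
    (hgood1surj : ∀ δ : ℤ, δ ≤ 1 → ∀ y ∈ gr1 (δ - 2), ∃ x ∈ gr1 δ, ⁅f1, x⁆ = y)
    (hgood2inj : ∀ δ : ℤ, 1 ≤ δ → ∀ x ∈ gr2 δ, ⁅f2, x⁆ = 0 → x = 0)
    (hgood2surj : ∀ δ : ℤ, δ ≤ 1 → ∀ y ∈ gr2 (δ - 2), ∃ x ∈ gr2 δ, ⁅f2, x⁆ = y)
    (hstar1 : (⨆ d : ℤ, ⨆ _ : (2 : ℤ) ≤ d, gr1 d) ≤ ⨆ d : ℤ, ⨆ _ : (1 : ℤ) ≤ d, gr2 d)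
    (hstar2 : (⨆ d : ℤ, ⨆ _ : (1 : ℤ) ≤ d, gr2 d) ≤ ⨆ d : ℤ, ⨆ _ : (0 : ℤ) ≤ d, gr1 d)
    (hstar3 : gr1 1 ≤ (gr1 1 ⊓ gr2 0) ⊔ (gr1 1 ⊓ gr2 1) ⊔ (gr1 1 ⊓ gr2 2))
    (hstar4 : gr2 1 ≤ (gr2 1 ⊓ gr1 0) ⊔ (gr2 1 ⊓ gr1 1) ⊔ (gr2 1 ⊓ gr1 2))
    (hstar5 : f2 - f1 ∈ gr1 0 ⊓ gr2 (-2))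
    :
    (∀ u ∈ gr1 1 ⊓ gr2 2, ∀ v ∈ gr1 1 ⊓ gr2 2, Φ f1 ⁅u, v⁆ = 0) ∧
    ({v : g | v ∈ gr1 1 ∧ ∀ u ∈ gr1 1 ⊓ gr2 2, Φ f1 ⁅v, u⁆ = 0}
      = ↑((gr1 1 ⊓ gr2 1) ⊔ (gr1 1 ⊓ gr2 2))) := by
  by_cases hf0 : f1 = 0
  · -- degenerate case : the first grading has trivial piece in degree 1
    have hg11 : gr1 1 = ⊥ := by
      rw [eq_bot_iff]
      intro x hx
      have := hgood1inj 1 le_rfl x hx (by rw [hf0, zero_lie])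
      simp [this]
    constructor
    · intro u hu v hv
      have hu0 : u = 0 := by
        have := hu.1
        rw [hg11] at this
        simpa using this
      rw [hu0, zero_lie, map_zero]
    · ext v
      simp only [Set.mem_setOf_eq, SetLike.mem_coe]
      constructor
      · rintro ⟨hv1, -⟩
        rw [hg11] at hv1
        simp only [Submodule.mem_bot] at hv1
        rw [hv1]
        exact Submodule.zero_mem _
      · intro hv
        have hle : (gr1 1 ⊓ gr2 1) ⊔ (gr1 1 ⊓ gr2 2) ≤ gr1 1 :=
          sup_le inf_le_left inf_le_left
        have hv1 : v ∈ gr1 1 := hle hv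
        refine ⟨hv1, fun u hu => ?_⟩
        have hv0 : v = 0 := by
          rw [hg11] at hv1
          simpa using hv1
        rw [hv0, zero_lie, map_zero]
  · -- main case
    obtain ⟨x₀, hx₀mem, hx₀⟩ := hgood1surj 0 (by norm_num) f1 (by norm_num; exact hf1)
    have hex : ⁅x₀, f1⁆ = -f1 := by
      rw [← lie_skew, hx₀]
    haveI : LieAlgebra.IsKilling ℂ g := isKilling_of_eigen hf0 hex
    have ortho1 := graded_ortho Φ hinv gr1 hdec1 hbr1
    have ortho2 := graded_ortho Φ hinv gr2 hdec2 hbr2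
    have hf1g2 : f1 ∈ gr2 (-2) := by
      have := (gr2 (-2)).sub_mem hf2 hstar5.2
      simpa using this
    have part1 : ∀ u ∈ gr1 1 ⊓ gr2 2, ∀ v ∈ gr1 1 ⊓ gr2 2, Φ f1 ⁅u, v⁆ = 0 := by
      intro u hu v hv
      exact ortho2 (-2) (2 + 2) (by norm_num) f1 hf1g2 _ (hbr2 2 2 u hu.2 v hv.2)
    have hBu : ∀ b ∈ gr2 1, ∀ u ∈ gr2 2, Φ f1 ⁅b, u⁆ = 0 := fun b hb u hu =>
      ortho2 (-2) (1 + 2) (by norm_num) f1 hf1g2 _ (hbr2 1 2 b hb u hu)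
    refine ⟨part1, ?_⟩
    ext v
    simp only [Set.mem_setOf_eq, SetLike.mem_coe]
    constructor
    · rintro ⟨hv1, hv2⟩
      obtain ⟨ab, hab, c, hc, rfl⟩ := Submodule.mem_sup.mp (hstar3 hv1)
      obtain ⟨a, ha, b, hb, rfl⟩ := Submodule.mem_sup.mp hab
      -- show a = 0
      have hya : ∀ u ∈ gr1 1 ⊓ gr2 2, Φ f1 ⁅a, u⁆ = 0 := by
        intro u hu
        have h2 := hv2 u hu
        have hbu : Φ f1 ⁅b, u⁆ = 0 := hBu b hb.2 u hu.2
        have hcu : Φ f1 ⁅c, u⁆ = 0 := part1 c hc u hu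
        have hexp : Φ f1 ⁅a + b + c, u⁆ = Φ f1 ⁅a, u⁆ + Φ f1 ⁅b, u⁆ + Φ f1 ⁅c, u⁆ := by
          simp [add_lie]
        rw [hexp, hbu, hcu, add_zero, add_zero] at h2
        exact h2
      have hw1 : (⁅f1, a⁆ : g) ∈ gr1 (-1) := by
        have := hbr1 (-2) 1 f1 hf1 a ha.1
        norm_num at this
        exact this
      have hw2 : (⁅f1, a⁆ : g) ∈ gr2 (-2) := by
        have := hbr2 (-2) 0 f1 hf1g2 a ha.2
        norm_num at this
        exact this
      have hwzero : ∀ y : g, Φ ⁅f1, a⁆ y = 0 := by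
        intro y
        have hy : y ∈ ⨆ p : ℤ × ℤ, (gr1 p.1 ⊓ gr2 p.2 : Submodule ℂ g) := by
          rw [hbidec.submodule_iSup_eq_top]
          trivial
        refine Submodule.iSup_induction _ (motive := fun y => Φ ⁅f1, a⁆ y = 0) hy ?_ (map_zero _) ?_
        · rintro ⟨p, q⟩ z hz
          rcases eq_or_ne p 1 with rfl | hp
          · rcases eq_or_ne q 2 with rfl | hq
            · rw [hinv f1 a z]
              exact hya z hz
            · exact ortho2 (-2) q (by omega) _ hw2 z hz.2
          · exact ortho1 (-1) p (by omega) _ hw1 z hz.1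
        · intro y1 y2 e1 e2
          rw [map_add, e1, e2, add_zero]
      have hweq : (⁅f1, a⁆ : g) = 0 := hnondeg _ hwzero
      have ha0 : a = 0 := hgood1inj 1 le_rfl a ha.1 hweq
      rw [ha0, zero_add]
      exact Submodule.add_mem_sup hb hc
    · intro hv
      obtain ⟨b, hb, c, hc, rfl⟩ := Submodule.mem_sup.mp hv
      refine ⟨(gr1 1).add_mem hb.1 hc.1, fun u hu => ?_⟩
      have hexp : Φ f1 ⁅b + c, u⁆ = Φ f1 ⁅b, u⁆ + Φ f1 ⁅c, u⁆ := by
        simp [add_lie]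
      rw [hexp, hBu b hb.2 u hu.2, part1 c hc u hu, add_zero]
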